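/- Let f : ℝ → ℝ be analytic at 0 with f(0) = 0, and suppose there exists ε > 0 such that for every t with |t| < ε the series Σ_{k=0}^∞ ((2k)!)² / (16^k (k!)² (2k+1)!) · f(t)^{2k+1} converges with sum t. Then for every j ∈ ℕ the (2j)-th derivative of f at 0 equals 0 and the (2j+1)-st derivative of f at 0 equals (−1)^j / 4^j. -/

import Mathlib

open Real Filter Set

lemma cb_le_pow (k : ℕ) : (Nat.centralBinom k : ℝ) ≤ 4 ^ k := by
  induction k with
  | zero => simp [Nat.centralBinom_zero]
  | succ n ih =>
    have h : ((n : ℝ) + 1) * (Nat.centralBinom (n+1) : ℝ)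
        = 2 * (2 * (n : ℝ) + 1) * (Nat.centralBinom n : ℝ) := by
      exact_mod_cast Nat.succ_mul_centralBinom_succ n
    have hn : (0:ℝ) < (n:ℝ) + 1 := by positivity
    have hcb : (0:ℝ) ≤ (Nat.centralBinom n : ℝ) := by positivity
    have h4 : (0:ℝ) < 4 ^ n := by positivity
    have key : ((n : ℝ) + 1) * (Nat.centralBinom (n+1) : ℝ)
        ≤ ((n : ℝ) + 1) * (4 ^ (n+1)) := by
      rw [h, pow_succ]
      nlinarith
    exact le_of_mul_le_mul_left key hn

lemma const_of_hasDerivAt_zero {s : Set ℝ} (hs : IsOpen s) (hc : Convex ℝ s) {φ : ℝ → ℝ}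
    (h : ∀ x ∈ s, HasDerivAt φ 0 x) {x y : ℝ} (hx : x ∈ s) (hy : y ∈ s) : φ x = φ y := by
  refine hc.is_const_of_fderivWithin_eq_zero
    (fun z hz => ((h z hz).differentiableAt).differentiableWithinAt) (fun z hz => ?_) hx hy
  rw [fderivWithin_of_isOpen hs hz, ((h z hz).hasFDerivAt).fderiv]
  ext
  simp



private def gB (k : ℕ) (z : ℝ) : ℝ := (Nat.centralBinom k : ℝ) * z ^ k
private def gB' (k : ℕ) (z : ℝ) : ℝ := (Nat.centralBinom k : ℝ) * (k * z ^ (k-1))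

private lemma gB_deriv (k : ℕ) (z : ℝ) : HasDerivAt (gB k) (gB' k z) z :=
  (hasDerivAt_pow k z).const_mul _

private lemma uB_summable : Summable (fun k : ℕ => 8 * ((k:ℝ) * (1/2)^k)) := by
  have h : ‖(1/2 : ℝ)‖ < 1 := by
    rw [Real.norm_eq_abs, abs_of_nonneg (by norm_num)]; norm_num
  have := summable_pow_mul_geometric_of_norm_lt_one (R := ℝ) 1 h
  simpa [pow_one] using this.mul_left 8

private lemma gB'_bound {k : ℕ} {z : ℝ} (hz : |z| ≤ 1/8) :
    ‖gB' k z‖ ≤ 8 * ((k:ℝ) * (1/2)^k) := by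
  match k with
  | 0 => simp [gB']
  | n+1 =>
    have h1 : ‖gB' (n+1) z‖ = (Nat.centralBinom (n+1) : ℝ) * (((n:ℝ)+1) * |z| ^ n) := by
      rw [Real.norm_eq_abs, gB']
      rw [abs_mul, abs_mul, abs_pow, Nat.abs_cast, Nat.abs_cast]
      push_cast
      ring
    rw [h1]
    have h2 : (Nat.centralBinom (n+1) : ℝ) * (((n:ℝ)+1) * |z| ^ n)
        ≤ 4^(n+1) * (((n:ℝ)+1) * (1/8) ^ n) := by
      apply mul_le_mul (cb_le_pow (n+1))
      · apply mul_le_mul_of_nonneg_left (pow_le_pow_left₀ (abs_nonneg z) hz n)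
        positivity
      · positivity
      · positivity
    refine h2.trans (le_of_eq ?_)
    have h8 : (8:ℝ)^n = 4^n * 2^n := by rw [← mul_pow]; norm_num
    field_simp
    rw [show (1/8:ℝ)^n = (1/4)^n * (1/2)^n by rw [← mul_pow]; norm_num]
    push_cast
    have h41 : (4:ℝ)^n * (1/4)^n = 1 := by rw [← mul_pow]; norm_num
    linear_combination (4*((n:ℝ)+1)*(1/2)^n) * h41

private lemma gB_bound {k : ℕ} {z : ℝ} (hz : |z| ≤ 1/8) : ‖gB k z‖ ≤ (1/2:ℝ)^k := by
  have h1 : ‖gB k z‖ = (Nat.centralBinom k : ℝ) * |z| ^ k := by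
    rw [Real.norm_eq_abs, gB, abs_mul, abs_pow, Nat.abs_cast]
  rw [h1]
  calc (Nat.centralBinom k : ℝ) * |z|^k ≤ 4^k * (1/8)^k := by
        apply mul_le_mul (cb_le_pow k) (pow_le_pow_left₀ (abs_nonneg z) hz k)
          (by positivity) (by positivity)
    _ = (1/2)^k := by rw [← mul_pow]; norm_num

private lemma gB_summable {z : ℝ} (hz : |z| ≤ 1/8) : Summable (fun k => gB k z) :=
  Summable.of_norm_bounded (summable_geometric_of_lt_one (by norm_num) (by norm_num))
    (fun k => gB_bound hz)

lemma cb_hasSum {y : ℝ} (hy : |y| < 1/8) :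
    HasSum (fun k : ℕ => (Nat.centralBinom k : ℝ) * y ^ k) (1 / Real.sqrt (1 - 4*y)) := by
  have hmem : ∀ {z : ℝ}, |z| < 1/8 → z ∈ Metric.ball (0:ℝ) (1/8) := fun {z} hz => by
    rw [Metric.mem_ball, Real.dist_eq, sub_zero]; exact hz
  have habs : ∀ {z : ℝ}, z ∈ Metric.ball (0:ℝ) (1/8) → |z| < 1/8 := fun {z} hz => by
    rw [Metric.mem_ball, Real.dist_eq, sub_zero] at hz; exact hz
  have hsum0 : Summable (fun k => gB k 0) := by
    apply (hasSum_single (0:ℕ) ?_).summable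
    intro b hb
    simp [gB, zero_pow hb]
  have hB : ∀ z ∈ Metric.ball (0:ℝ) (1/8),
      HasDerivAt (fun w => ∑' k, gB k w) (∑' k, gB' k z) z := by
    intro z hz
    exact hasDerivAt_tsum_of_isPreconnected uB_summable Metric.isOpen_ball
      ((convex_ball _ _).isPreconnected) (fun n w _ => gB_deriv n w)
      (fun n w hw => gB'_bound (le_of_lt (habs hw)))
      (hmem (by norm_num)) hsum0 hz
  have key : ∀ z ∈ Metric.ball (0:ℝ) (1/8),
      (1 - 4*z) * (∑' k, gB' k z) = 2 * (∑' k, gB k z) := by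
    intro z hz
    have hzabs := le_of_lt (habs hz)
    have hDs : HasSum (fun k => gB' k z) (∑' k, gB' k z) :=
      (Summable.of_norm_bounded uB_summable (fun k => gB'_bound hzabs)).hasSum
    have hshift : HasSum (fun k => gB' (k+1) z) (∑' k, gB' k z) := by
      refine (hasSum_nat_add_iff (f := fun k => gB' k z) 1).mpr ?_
      simpa [gB'] using hDs
    have hterm : ∀ k : ℕ, gB' (k+1) z = 4*z*gB' k z + 2 * gB k z := by
      intro k
      have hc : ((k : ℝ) + 1) * (Nat.centralBinom (k+1) : ℝ)
          = 2 * (2 * (k:ℝ) + 1) * (Nat.centralBinom k : ℝ) := by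
        exact_mod_cast Nat.succ_mul_centralBinom_succ k
      have hL : gB' (k+1) z = 2 * (2 * (k:ℝ) + 1) * (Nat.centralBinom k : ℝ) * z ^ k := by
        have h1 : gB' (k+1) z = (((k:ℝ)+1) * (Nat.centralBinom (k+1) : ℝ)) * z ^ k := by
          simp only [gB', Nat.add_sub_cancel]
          push_cast
          ring
        rw [h1, hc]
      match k with
      | 0 => rw [hL]; simp [gB, gB', Nat.centralBinom_zero]
      | m+1 =>
        rw [hL, gB, gB', Nat.add_sub_cancel]
        have hzz : z * z ^ m = z ^ (m+1) := by rw [pow_succ]; ring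
        push_cast
        linear_combination (4 * ((m:ℝ)+1) * (Nat.centralBinom (m+1):ℝ)) * hzz
    have h2 : HasSum (fun k => 4*z*gB' k z + 2 * gB k z)
        (4*z*(∑' k, gB' k z) + 2 * (∑' k, gB k z)) :=
      (hDs.mul_left _).add ((gB_summable hzabs).hasSum.mul_left 2)
    have h3 := hshift.unique ((funext hterm : (fun k => gB' (k+1) z) = _) ▸ h2)
    linarith
  have hpos : ∀ z ∈ Metric.ball (0:ℝ) (1/8), (0:ℝ) < 1 - 4*z := by
    intro z hz
    have := habs hz
    rw [abs_lt] at this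
    linarith
  have hφ : ∀ z ∈ Metric.ball (0:ℝ) (1/8),
      HasDerivAt (fun w => (∑' k, gB k w) * Real.sqrt (1 - 4*w)) 0 z := by
    intro z hz
    have h1 : HasDerivAt (fun w : ℝ => 1 - 4*w) (-4) z := by
      simpa using ((hasDerivAt_id z).const_mul (4:ℝ)).const_sub 1
    have hne : (1 - 4*z) ≠ 0 := ne_of_gt (hpos z hz)
    have h2 : HasDerivAt (fun w : ℝ => Real.sqrt (1 - 4*w))
        (1 / (2 * Real.sqrt (1 - 4*z)) * (-4)) z :=
      (Real.hasDerivAt_sqrt hne).comp z h1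
    have h3 := (hB z hz).mul h2
    have hqpos : 0 < Real.sqrt (1 - 4*z) := Real.sqrt_pos.2 (hpos z hz)
    have hq : Real.sqrt (1 - 4*z) * Real.sqrt (1 - 4*z) = 1 - 4*z :=
      Real.mul_self_sqrt (le_of_lt (hpos z hz))
    have hval : (∑' k, gB' k z) * Real.sqrt (1 - 4*z)
        + (∑' k, gB k z) * (1 / (2 * Real.sqrt (1 - 4*z)) * (-4)) = 0 := by
      have hrw : (∑' k, gB' k z) * Real.sqrt (1 - 4*z)
          + (∑' k, gB k z) * (1 / (2 * Real.sqrt (1 - 4*z)) * (-4))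
          = ((∑' k, gB' k z) * (Real.sqrt (1 - 4*z) * Real.sqrt (1 - 4*z))
              - 2 * (∑' k, gB k z)) / Real.sqrt (1 - 4*z) := by
        field_simp
        ring
      rw [hrw, hq]
      have h0 : (∑' k, gB' k z) * (1 - 4*z) - 2 * (∑' k, gB k z) = 0 := by
        have := key z hz
        linarith
      rw [h0, zero_div]
    rw [hval] at h3
    exact h3
  have hφ1 : ∀ z ∈ Metric.ball (0:ℝ) (1/8),
      (∑' k, gB k z) * Real.sqrt (1 - 4*z) = 1 := by
    intro z hz
    have h0 : (∑' k, gB k 0) * Real.sqrt (1 - 4*(0:ℝ)) = 1 := by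
      have hB0 : (∑' k, gB k 0) = 1 := by
        have : HasSum (fun k => gB k 0) (gB 0 0) :=
          hasSum_single 0 (fun b hb => by simp [gB, zero_pow hb])
        simpa [gB] using this.tsum_eq
      rw [hB0]
      norm_num
    have hconst := const_of_hasDerivAt_zero Metric.isOpen_ball (convex_ball _ _) hφ hz
      (hmem (show |(0:ℝ)| < 1/8 by norm_num))
    exact hconst.trans h0
  have hz' : y ∈ Metric.ball (0:ℝ) (1/8) := hmem hy
  have hqpos : 0 < Real.sqrt (1 - 4*y) := Real.sqrt_pos.2 (hpos y hz')
  have hBy : (∑' k, gB k y) = 1 / Real.sqrt (1 - 4*y) := by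
    rw [eq_div_iff (ne_of_gt hqpos)]
    exact hφ1 y hz'
  have hfin := (gB_summable (le_of_lt hy)).hasSum
  rw [hBy] at hfin
  exact hfin



private noncomputable def gA (k : ℕ) (x : ℝ) : ℝ :=
  (Nat.centralBinom k : ℝ) / (4^k * (2*(k:ℝ)+1)) * x ^ (2*k+1)
private noncomputable def gA' (k : ℕ) (x : ℝ) : ℝ :=
  (Nat.centralBinom k : ℝ) / (4^k * (2*(k:ℝ)+1)) * ((2*(k:ℝ)+1) * x ^ (2*k))

private lemma gA_deriv (k : ℕ) (x : ℝ) : HasDerivAt (gA k) (gA' k x) x := by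
  have h := (hasDerivAt_pow (2*k+1) x).const_mul
    ((Nat.centralBinom k : ℝ) / (4^k * (2*(k:ℝ)+1)))
  have heq : ((Nat.centralBinom k : ℝ) / (4^k * (2*(k:ℝ)+1)))
      * ((2*k+1 : ℕ) * x ^ (2*k+1-1)) = gA' k x := by
    simp only [gA', Nat.add_sub_cancel]
    push_cast
    ring
  rw [← heq]
  exact h

private lemma gA'_eq (k : ℕ) (x : ℝ) :
    gA' k x = (Nat.centralBinom k : ℝ) * (x^2/4) ^ k := by
  have h1 : (2*(k:ℝ)+1) ≠ 0 := by positivity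
  have h4 : ((4:ℝ)^k) ≠ 0 := by positivity
  simp only [gA']
  rw [div_pow, pow_mul]
  field_simp

private lemma cb_div_le (k : ℕ) : (Nat.centralBinom k : ℝ) / (4^k * (2*(k:ℝ)+1)) ≤ 1 := by
  rw [div_le_one (by positivity)]
  calc (Nat.centralBinom k : ℝ) ≤ 4^k := cb_le_pow k
    _ = 4^k * 1 := (mul_one _).symm
    _ ≤ 4^k * (2*(k:ℝ)+1) := by
        apply mul_le_mul_of_nonneg_left (by linarith [Nat.cast_nonneg (α := ℝ) k]) (by positivity)

private lemma gA'_bound {k : ℕ} {x : ℝ} (hx : |x| ≤ 1/2) : ‖gA' k x‖ ≤ (1/4:ℝ)^k := by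
  rw [gA'_eq]
  rw [Real.norm_eq_abs, abs_mul, Nat.abs_cast, abs_pow]
  have h1 : |x^2/4| ≤ 1/16 := by
    rw [abs_of_nonneg (by positivity)]
    nlinarith [sq_abs x, abs_nonneg x, hx]
  calc (Nat.centralBinom k : ℝ) * |x^2/4|^k ≤ 4^k * (1/16)^k := by
        apply mul_le_mul (cb_le_pow k) (pow_le_pow_left₀ (abs_nonneg _) h1 k)
          (by positivity) (by positivity)
    _ = (1/4)^k := by rw [← mul_pow]; norm_num

private lemma gA_bound {k : ℕ} {x : ℝ} (hx : |x| ≤ 1/2) : ‖gA k x‖ ≤ (1/2:ℝ) * (1/4)^k := by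
  have h1 : ‖gA k x‖ = ((Nat.centralBinom k : ℝ) / (4^k * (2*(k:ℝ)+1))) * |x| ^ (2*k+1) := by
    rw [Real.norm_eq_abs, gA, abs_mul, abs_pow, abs_div]
    rw [Nat.abs_cast, abs_of_nonneg (by positivity : (0:ℝ) ≤ 4^k * (2*(k:ℝ)+1))]
  rw [h1]
  calc ((Nat.centralBinom k : ℝ) / (4^k * (2*(k:ℝ)+1))) * |x| ^ (2*k+1)
      ≤ 1 * (1/2)^(2*k+1) := by
        apply mul_le_mul (cb_div_le k) (pow_le_pow_left₀ (abs_nonneg _) hx _)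
          (by positivity) (by norm_num)
    _ = (1/2:ℝ) * (1/4)^k := by
        rw [one_mul, pow_succ, pow_mul]
        norm_num
        ring

lemma arcsin_hasSum {x : ℝ} (hx : |x| < 1/2) :
    HasSum (fun k : ℕ => (Nat.centralBinom k : ℝ) / (4^k * (2*(k:ℝ)+1)) * x ^ (2*k+1))
      (Real.arcsin x) := by
  have hmem : ∀ {z : ℝ}, |z| < 1/2 → z ∈ Metric.ball (0:ℝ) (1/2) := fun {z} hz => by
    rw [Metric.mem_ball, Real.dist_eq, sub_zero]; exact hz
  have habs : ∀ {z : ℝ}, z ∈ Metric.ball (0:ℝ) (1/2) → |z| < 1/2 := fun {z} hz => by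
    rw [Metric.mem_ball, Real.dist_eq, sub_zero] at hz; exact hz
  have hu : Summable (fun k : ℕ => (1/4:ℝ)^k) :=
    summable_geometric_of_lt_one (by norm_num) (by norm_num)
  have hsum0 : Summable (fun k => gA k 0) := by
    apply summable_zero.congr
    intro k
    simp [gA, zero_pow (Nat.succ_ne_zero (2*k))]
  have hA : ∀ z ∈ Metric.ball (0:ℝ) (1/2),
      HasDerivAt (fun w => ∑' k, gA k w) (∑' k, gA' k z) z := by
    intro z hz
    exact hasDerivAt_tsum_of_isPreconnected hu Metric.isOpen_ball
      ((convex_ball _ _).isPreconnected) (fun n w _ => gA_deriv n w)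
      (fun n w hw => gA'_bound (le_of_lt (habs hw)))
      (hmem (by norm_num)) hsum0 hz
  have hA' : ∀ z ∈ Metric.ball (0:ℝ) (1/2),
      HasDerivAt (fun w => ∑' k, gA k w) (1 / Real.sqrt (1 - z^2)) z := by
    intro z hz
    have hz2 : |z^2/4| < 1/8 := by
      have := habs hz
      rw [abs_of_nonneg (by positivity)]
      nlinarith [sq_abs z, abs_nonneg z]
    have hs := cb_hasSum hz2
    have hterm : (fun k : ℕ => (Nat.centralBinom k : ℝ) * (z^2/4) ^ k)
        = fun k => gA' k z := by
      funext k
      rw [gA'_eq]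
    rw [hterm] at hs
    have htsum : (∑' k, gA' k z) = 1 / Real.sqrt (1 - z^2) := by
      rw [hs.tsum_eq]
      ring_nf
    rw [← htsum]
    exact hA z hz
  have harcsin : ∀ z ∈ Metric.ball (0:ℝ) (1/2),
      HasDerivAt (fun w => (∑' k, gA k w) - Real.arcsin w) 0 z := by
    intro z hz
    have h1 : z ≠ -1 := by intro h; rw [h] at hz; have := habs hz; norm_num at this
    have h2 : z ≠ 1 := by intro h; rw [h] at hz; have := habs hz; norm_num at this
    have := (hA' z hz).sub (Real.hasDerivAt_arcsin h1 h2)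
    rw [sub_self] at this
    exact this
  have heq0 : (∑' k, gA k 0) - Real.arcsin 0 = 0 := by
    have : (∑' k, gA k 0) = 0 := by
      have : ∀ k, gA k (0:ℝ) = 0 := fun k => by
        simp [gA, zero_pow (Nat.succ_ne_zero (2*k))]
      rw [funext this]
      exact tsum_zero
    rw [this, Real.arcsin_zero, sub_zero]
  have hx' : x ∈ Metric.ball (0:ℝ) (1/2) := hmem hx
  have hconst := const_of_hasDerivAt_zero Metric.isOpen_ball (convex_ball _ _) harcsin hx'
    (hmem (show |(0:ℝ)| < 1/2 by norm_num))
  rw [heq0] at hconst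
  have hAx : (∑' k, gA k x) = Real.arcsin x := by linarith [sub_eq_zero.mp hconst]
  have hsummable : Summable (fun k => gA k x) :=
    Summable.of_norm_bounded (hu.mul_left (1/2)) (fun k => gA_bound (le_of_lt hx))
  have := hsummable.hasSum
  rw [hAx] at this
  exact this



private lemma coeff_eq (k : ℕ) (z : ℝ) :
    ((Nat.factorial (2 * k) : ℝ)) ^ 2 /
        (16 ^ k * (Nat.factorial k : ℝ) ^ 2 * (Nat.factorial (2 * k + 1) : ℝ)) * z ^ (2*k+1)
    = 2 * ((Nat.centralBinom k : ℝ) / (4^k * (2*(k:ℝ)+1)) * (z/2) ^ (2*k+1)) := by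
  have h1 : (Nat.centralBinom k : ℝ) * ((Nat.factorial k : ℝ))^2 = (Nat.factorial (2*k) : ℝ) := by
    have := Nat.choose_mul_factorial_mul_factorial (Nat.le_mul_of_pos_left k (by norm_num : 0 < 2))
    have h2 : 2 * k - k = k := by omega
    rw [h2] at this
    have : Nat.centralBinom k * (Nat.factorial k * Nat.factorial k) = Nat.factorial (2*k) := by
      rw [Nat.centralBinom]
      rw [← this]
      ring
    calc (Nat.centralBinom k : ℝ) * ((Nat.factorial k : ℝ))^2
        = ((Nat.centralBinom k * (Nat.factorial k * Nat.factorial k) : ℕ) : ℝ) := by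
          push_cast; ring
      _ = (Nat.factorial (2*k) : ℝ) := by rw [this]
  have h2 : (Nat.factorial (2*k+1) : ℝ) = (2*(k:ℝ)+1) * (Nat.factorial (2*k) : ℝ) := by
    rw [Nat.factorial_succ]
    push_cast
    ring
  have hfk : ((Nat.factorial k : ℝ)) ≠ 0 := Nat.cast_ne_zero.2 (Nat.factorial_ne_zero k)
  have hf2k : ((Nat.factorial (2*k) : ℝ)) ≠ 0 := Nat.cast_ne_zero.2 (Nat.factorial_ne_zero _)
  have h2k1 : (2*(k:ℝ)+1) ≠ 0 := by positivity
  have h16 : ((16:ℝ)^k) ≠ 0 := by positivity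
  have h4 : ((4:ℝ)^k) ≠ 0 := by positivity
  have hz2 : (z/2)^(2*k+1) = z^(2*k+1) / (2 * 4^k) := by
    rw [div_pow]
    congr 1
    rw [pow_succ, pow_mul]
    norm_num
    ring
  have hcb : (Nat.centralBinom k : ℝ) ≠ 0 := Nat.cast_ne_zero.2 (Nat.centralBinom_ne_zero k)
  have h216 : (16:ℝ)^k = 4^k * 4^k := by rw [← mul_pow]; norm_num
  have hcoeff : ((Nat.factorial (2 * k) : ℝ)) ^ 2 /
      (16 ^ k * (Nat.factorial k : ℝ) ^ 2 * (Nat.factorial (2 * k + 1) : ℝ))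
      = (Nat.centralBinom k : ℝ) / (16^k * (2*(k:ℝ)+1)) := by
    rw [h2, ← h1]
    field_simp
  rw [hcoeff, hz2, h216]
  field_simp

private lemma sin_half_deriv (c : ℝ) (t : ℝ) :
    HasDerivAt (fun t : ℝ => c * (2 * Real.sin (t/2))) (c * Real.cos (t/2)) t := by
  have h2 : HasDerivAt (fun t : ℝ => t/2) (1/2) t := (hasDerivAt_id t).div_const 2
  have hs : HasDerivAt (fun t : ℝ => Real.sin (t/2)) (Real.cos (t/2) * (1/2)) t :=
    by have := (Real.hasDerivAt_sin (t/2)).comp t h2; exact this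
  have := hs.const_mul (c * 2)
  have e1 : (fun t : ℝ => c * (2 * Real.sin (t/2))) = fun y => c * 2 * Real.sin (y/2) := by
    funext w; ring
  rw [e1, show c * Real.cos (t/2) = c * 2 * (Real.cos (t/2) * (1/2)) by ring]
  exact this

private lemma cos_half_deriv (c : ℝ) (t : ℝ) :
    HasDerivAt (fun t : ℝ => c * Real.cos (t/2)) ((c * (-1/4)) * (2 * Real.sin (t/2))) t := by
  have h2 : HasDerivAt (fun t : ℝ => t/2) (1/2) t := (hasDerivAt_id t).div_const 2
  have hs : HasDerivAt (fun t : ℝ => Real.cos (t/2)) (-Real.sin (t/2) * (1/2)) t :=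
    by have := (Real.hasDerivAt_cos (t/2)).comp t h2; exact this
  have := hs.const_mul c
  rw [show (c * (-1/4)) * (2 * Real.sin (t/2)) = c * (-Real.sin (t/2) * (1/2)) by ring]
  exact this

private lemma iter_sin_half : ∀ j : ℕ,
    iteratedDeriv (2*j) (fun t : ℝ => 2 * Real.sin (t/2))
      = (fun t => (-(1:ℝ)/4)^j * (2 * Real.sin (t/2)))
    ∧ iteratedDeriv (2*j+1) (fun t : ℝ => 2 * Real.sin (t/2))
      = (fun t => (-(1:ℝ)/4)^j * Real.cos (t/2)) := by
  intro j
  induction j with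
  | zero =>
    constructor
    · rw [Nat.mul_zero, iteratedDeriv_zero]
      funext t; ring
    · rw [Nat.mul_zero, Nat.zero_add, iteratedDeriv_one]
      funext t
      rw [pow_zero, one_mul]
      have := sin_half_deriv 1 t
      simp only [one_mul] at this
      exact this.deriv
  | succ j ih =>
    have heven : 2*(j+1) = (2*j+1)+1 := by ring
    have hodd : 2*(j+1)+1 = (2*(j+1))+1 := rfl
    have he : iteratedDeriv (2*(j+1)) (fun t : ℝ => 2 * Real.sin (t/2))
        = (fun t => (-(1:ℝ)/4)^(j+1) * (2 * Real.sin (t/2))) := by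
      rw [heven, iteratedDeriv_succ, ih.2]
      funext t
      rw [(cos_half_deriv ((-(1:ℝ)/4)^j) t).deriv]
      ring
    refine ⟨he, ?_⟩
    rw [hodd, iteratedDeriv_succ, he]
    funext t
    rw [(sin_half_deriv ((-(1:ℝ)/4)^(j+1)) t).deriv]


/-- Open orbifold Gromov–Witten invariants of ℙ(1,1,2): if `f` is analytic at `0`,
`f 0 = 0`, and `g₂(f(t)) = t` for `t` near `0` (in the sense of convergent sums),
then the even derivatives of `f` at `0` vanish and the odd ones equal
`(−1)ʲ/4ʲ`. -/
theorem openGW_P112 (f : ℝ → ℝ) (hf : AnalyticAt ℝ f 0) (hf0 : f 0 = 0)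
    (hinv : ∃ ε > (0 : ℝ), ∀ t : ℝ, |t| < ε →
      HasSum (fun k : ℕ =>
        ((Nat.factorial (2 * k) : ℝ)) ^ 2 /
            (16 ^ k * (Nat.factorial k : ℝ) ^ 2 * (Nat.factorial (2 * k + 1) : ℝ)) *
          (f t) ^ (2 * k + 1)) t) :
    ∀ j : ℕ, iteratedDeriv (2 * j) f 0 = 0 ∧
      iteratedDeriv (2 * j + 1) f 0 = (-1) ^ j / 4 ^ j := by
  obtain ⟨ε, hε, hsum⟩ := hinv
  have hcont : ContinuousAt f 0 := hf.continuousAt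
  obtain ⟨δ, hδ, hδ'⟩ := Metric.continuousAt_iff.1 hcont 1 one_pos
  have heq : ∀ t : ℝ, |t| < min ε δ → f t = 2 * Real.sin (t/2) := by
    intro t ht
    have ht1 : |t| < ε := lt_of_lt_of_le ht (min_le_left _ _)
    have ht2 : |t| < δ := lt_of_lt_of_le ht (min_le_right _ _)
    have hft : |f t| < 1 := by
      have := hδ' (show dist t 0 < δ by rwa [Real.dist_eq, sub_zero])
      rwa [Real.dist_eq, hf0, sub_zero] at this
    have hhalf : |f t / 2| < 1/2 := by
      have h2 : |f t / 2| = |f t| / 2 := by rw [abs_div, abs_two]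
      rw [h2]; linarith
    have hA := (arcsin_hasSum hhalf).mul_left 2
    have hterm : (fun k : ℕ => 2 * ((Nat.centralBinom k : ℝ) / (4^k * (2*(k:ℝ)+1))
        * (f t / 2) ^ (2*k+1)))
        = fun k : ℕ => ((Nat.factorial (2 * k) : ℝ)) ^ 2 /
            (16 ^ k * (Nat.factorial k : ℝ) ^ 2 * (Nat.factorial (2 * k + 1) : ℝ)) *
          (f t) ^ (2 * k + 1) := funext fun k => (coeff_eq k (f t)).symm
    rw [hterm] at hA
    have huniq := (hsum t ht1).unique hA
    have harc : Real.arcsin (f t / 2) = t / 2 := by linarith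
    have hb := abs_lt.1 hhalf
    have hsin := Real.sin_arcsin (x := f t / 2) (by linarith) (by linarith)
    rw [harc] at hsin
    linarith
  have hr : 0 < min ε δ := lt_min hε hδ
  have hev : f =ᶠ[nhds 0] (fun t => 2 * Real.sin (t/2)) := by
    filter_upwards [Metric.ball_mem_nhds (0:ℝ) hr] with t ht
    rw [Metric.mem_ball, Real.dist_eq, sub_zero] at ht
    exact heq t ht
  intro j
  constructor
  · rw [Filter.EventuallyEq.iteratedDeriv_eq _ hev, (iter_sin_half j).1]
    simp
  · rw [Filter.EventuallyEq.iteratedDeriv_eq _ hev, (iter_sin_half j).2]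
    norm_num
    rw [neg_pow, div_pow, one_pow, mul_one_div]
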